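/- arXiv:2502.00349 — 6 statements merged into one kernel-verified Lean document; each statement's English description precedes it below -/
import Mathlib

section
/- For a random variable X with quantile density function q(u) = (1-u)^(-A) (-log(1-u))^(-B) where 0 < A < 2 and B < 1, the Q-FCRE equals Γ(α - B + 1)/(2-A)^(α-B+1). -/
open MeasureTheory Set Real

lemma image_one_sub_exp_neg : (fun t : ℝ => 1 - Real.exp (-t)) '' Set.Ioi 0 = Set.Ioo 0 1 := by
  ext x
  simp only [Set.mem_image, Set.mem_Ioi, Set.mem_Ioo]
  constructor
  · rintro ⟨t, ht, rfl⟩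
    have h1 : Real.exp (-t) < 1 := by
      rw [Real.exp_lt_one_iff]; linarith [ht]
    have h2 : 0 < Real.exp (-t) := Real.exp_pos _
    exact ⟨by linarith, by linarith⟩
  · rintro ⟨hx0, hx1⟩
    refine ⟨-Real.log (1 - x), ?_, ?_⟩
    · have := Real.log_neg (by linarith : (0:ℝ) < 1 - x) (by linarith)
      linarith
    · simp only [neg_neg, Real.exp_log (by linarith : (0:ℝ) < 1 - x)]; ring

theorem qfcre_general_family (A B α : ℝ) (hA0 : 0 < A) (hA2 : A < 2) (hB : B < 1)
    (hα0 : 0 ≤ α) (hα1 : α ≤ 1) :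
    ∫ p in (0:ℝ)..1,
        (1 - p) * (-Real.log (1 - p)) ^ α * ((1 - p) ^ (-A) * (-Real.log (1 - p)) ^ (-B))
      = Real.Gamma (α - B + 1) / (2 - A) ^ (α - B + 1) := by
  have hr : (0:ℝ) < 2 - A := by linarith
  have ha : (0:ℝ) < α - B + 1 := by linarith
  rw [intervalIntegral.integral_of_le (by norm_num), MeasureTheory.integral_Ioc_eq_integral_Ioo,
    ← image_one_sub_exp_neg]
  rw [MeasureTheory.integral_image_eq_integral_abs_deriv_smul measurableSet_Ioi
    (f' := fun t => Real.exp (-t))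
    (fun x _ => by
      have : HasDerivAt (fun t : ℝ => 1 - Real.exp (-t)) (Real.exp (-x)) x := by
        simpa using ((Real.hasDerivAt_exp (-x)).comp x (hasDerivAt_neg x)).const_sub 1
      exact this.hasDerivWithinAt)
    (fun x _ y _ hxy => by
      have h := Real.exp_injective (by linarith [sub_eq_sub_iff_sub_eq_sub.mp hxy] : Real.exp (-x) = Real.exp (-y))
      linarith [neg_injective h])
    _]
  rw [MeasureTheory.setIntegral_congr_fun measurableSet_Ioi (g := fun t : ℝ =>
        t ^ (α - B + 1 - 1) * Real.exp (-((2 - A) * t))) ?_,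
    Real.integral_rpow_mul_exp_neg_mul_Ioi ha hr, div_rpow (by norm_num) hr.le,
    Real.one_rpow, div_mul_eq_mul_div, one_mul]
  intro t ht
  have ht0 : (0:ℝ) < t := ht
  have hsimp : 1 - (1 - Real.exp (-t)) = Real.exp (-t) := by ring
  simp only [hsimp, Real.log_exp, neg_neg, smul_eq_mul, abs_of_pos (Real.exp_pos (-t))]
  have h1 : Real.exp (-t) ^ (-A) = Real.exp (A * t) := by
    rw [← Real.exp_mul]; ring_nf
  rw [h1, show α - B + 1 - 1 = α + -B by ring, Real.rpow_add ht0,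
    show -((2 - A) * t) = -t + (-t + A * t) by ring, Real.exp_add, Real.exp_add]
  ring
end

section
/- For the exponential distribution with rate λ, the quantile-based dynamic fractional cumulative residual entropy is constant in u: E_α^Q(X, u) = Γ(α+1)/λ for all u ∈ [0,1). -/
open MeasureTheory Real Set

theorem qdfcre_exponential (lam α : ℝ) (hlam : 0 < lam) (hα0 : 0 ≤ α) (hα1 : α ≤ 1) :
    ∀ u ∈ Set.Ico (0:ℝ) 1,
      (1 / (1 - u)) *
          ∫ p in u..1,
            (1 - p) * (Real.log (1 - u) - Real.log (1 - p)) ^ α * (1 / (lam * (1 - p)))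
        = Real.Gamma (α + 1) / lam := by
  rintro u ⟨hu0, hu1⟩
  have hc : (0:ℝ) < 1 - u := by linarith
  set f : ℝ → ℝ := fun t => 1 - (1 - u) * Real.exp (-t) with hf
  set f' : ℝ → ℝ := fun t => (1 - u) * Real.exp (-t) with hf'
  have himg : f '' Set.Ioi 0 = Set.Ioo u 1 := by
    ext y
    constructor
    · rintro ⟨t, ht, rfl⟩
      have ht0 : (0:ℝ) < t := ht
      have ht' : Real.exp (-t) < 1 := by
        rw [Real.exp_lt_one_iff]; linarith
      have h1 : 0 < (1 - u) * Real.exp (-t) := mul_pos hc (Real.exp_pos _)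
      constructor
      · simp only [hf]; nlinarith
      · simp only [hf]; linarith
    · rintro ⟨hy1, hy2⟩
      refine ⟨Real.log ((1 - u) / (1 - y)), ?_, ?_⟩
      · apply Real.log_pos
        rw [lt_div_iff₀ (by linarith)]
        linarith
      · have h1y : (0:ℝ) < 1 - y := by linarith
        simp only [hf]
        rw [Real.exp_neg, Real.exp_log (div_pos hc h1y)]
        field_simp
        ring
  have hinj : Set.InjOn f (Set.Ioi 0) := by
    intro a _ b _ hab
    simp only [hf] at hab
    have h1 : (1 - u) * Real.exp (-a) = (1 - u) * Real.exp (-b) := by linarith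
    have h2 : Real.exp (-a) = Real.exp (-b) := mul_left_cancel₀ hc.ne' h1
    have := Real.exp_injective h2
    linarith
  have hderiv : ∀ t ∈ Set.Ioi (0:ℝ), HasDerivWithinAt f (f' t) (Set.Ioi 0) t := by
    intro t _
    have h1 : HasDerivAt (fun t => Real.exp (-t)) (-Real.exp (-t)) t := by
      simpa using (hasDerivAt_neg t).exp
    have h2 : HasDerivAt f (f' t) t := by
      simpa [hf, hf', mul_comm] using ((h1.const_mul (1 - u)).const_sub 1)
    exact h2.hasDerivWithinAt
  have key : (∫ y in Set.Ioo u 1,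
      (1 - y) * (Real.log (1 - u) - Real.log (1 - y)) ^ α * (1 / (lam * (1 - y))))
      = ∫ t in Set.Ioi (0:ℝ), |f' t| •
        ((1 - f t) * (Real.log (1 - u) - Real.log (1 - f t)) ^ α * (1 / (lam * (1 - f t)))) := by
    rw [← himg]
    exact integral_image_eq_integral_abs_deriv_smul measurableSet_Ioi hderiv hinj _
  have hsimp : (∫ t in Set.Ioi (0:ℝ), |f' t| •
        ((1 - f t) * (Real.log (1 - u) - Real.log (1 - f t)) ^ α * (1 / (lam * (1 - f t)))))
      = ∫ t in Set.Ioi (0:ℝ), ((1 - u) / lam) * (Real.exp (-t) * t ^ α) := by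
    apply setIntegral_congr_fun measurableSet_Ioi
    intro t ht
    dsimp only
    have htp : (0:ℝ) < t := ht
    have hE : (0:ℝ) < Real.exp (-t) := Real.exp_pos _
    have h1ft : 1 - f t = (1 - u) * Real.exp (-t) := by simp [hf]
    have hlog : Real.log (1 - f t) = Real.log (1 - u) - t := by
      rw [h1ft, Real.log_mul hc.ne' hE.ne', Real.log_exp]
      ring
    have habs : |f' t| = (1 - u) * Real.exp (-t) := by
      rw [hf']
      exact abs_of_pos (mul_pos hc hE)
    rw [hlog, h1ft, habs]
    have hne : (1 - u) * Real.exp (-t) ≠ 0 := (mul_pos hc hE).ne'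
    simp only [smul_eq_mul]
    have : Real.log (1 - u) - (Real.log (1 - u) - t) = t := by ring
    rw [this]
    field_simp
  have hgamma : (∫ t in Set.Ioi (0:ℝ), Real.exp (-t) * t ^ α) = Real.Gamma (α + 1) := by
    rw [Real.Gamma_eq_integral (by linarith : (0:ℝ) < α + 1)]
    simp
  rw [intervalIntegral.integral_of_le hu1.le, MeasureTheory.integral_Ioc_eq_integral_Ioo,
    key, hsimp, MeasureTheory.integral_const_mul, hgamma]
  field_simp
end

section
/- For the re-scaled beta distribution with quantile function Q(u) = c(1 - (1-u)^{1/r}), r, c > 0, the Q-DFCRE equals r^α · c · (1-u)^{1/r} · Γ(α+1)/(r+1)^{α+1}. -/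
open MeasureTheory Set Real

theorem qdfcre_rescaled_beta (c r α : ℝ) (hc : 0 < c) (hr : 0 < r)
    (hα0 : 0 ≤ α) (hα1 : α ≤ 1) :
    ∀ u ∈ Set.Ico (0:ℝ) 1,
      (1 / (1 - u)) *
          ∫ p in u..1,
            (1 - p) * (Real.log (1 - u) - Real.log (1 - p)) ^ α *
              ((c / r) * (1 - p) ^ (1 / r - 1))
        = r ^ α * c * (1 - u) ^ (1 / r) * Real.Gamma (α + 1) / (r + 1) ^ (α + 1) := by
  intro u hu
  have hu1 : u < 1 := hu.2
  set b : ℝ := 1 - u with hbdef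
  have hb : 0 < b := by simp only [hbdef]; linarith
  set g : ℝ → ℝ := fun p =>
    (1 - p) * (Real.log b - Real.log (1 - p)) ^ α * ((c / r) * (1 - p) ^ (1 / r - 1)) with hg
  -- the substitution map
  set f : ℝ → ℝ := fun t => 1 - b * Real.exp (-t) with hf
  have himg : f '' Ioi (0:ℝ) = Ioo u 1 := by
    ext p
    constructor
    · rintro ⟨t, ht, rfl⟩
      have h1 : Real.exp (-t) < 1 := by
        rw [Real.exp_lt_one_iff]; simpa using ht
      have h2 : 0 < Real.exp (-t) := Real.exp_pos _
      constructor
      · simp only [hf]; nlinarith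
      · simp only [hf]; nlinarith
    · rintro ⟨hp1, hp2⟩
      refine ⟨Real.log (b / (1 - p)), ?_, ?_⟩
      · have : 1 < b / (1 - p) := by
          rw [lt_div_iff₀ (by linarith)]
          simp only [hbdef]; linarith
        simpa using Real.log_pos this
      · simp only [hf]
        rw [Real.exp_neg, Real.exp_log (div_pos hb (by linarith)), inv_div]
        field_simp
        ring
  have hderiv : ∀ t ∈ Ioi (0:ℝ),
      HasDerivWithinAt f (b * Real.exp (-t)) (Ioi (0:ℝ)) t := by
    intro t _
    have h1 : HasDerivAt (fun t : ℝ => Real.exp (-t)) (-Real.exp (-t)) t := by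
      simpa [Function.comp_def] using (Real.hasDerivAt_exp (-t)).comp t (hasDerivAt_neg t)
    have h2 : HasDerivAt f (b * Real.exp (-t)) t := by
      have := (h1.const_mul b).const_sub 1
      simpa [hf, mul_comm] using this
    exact h2.hasDerivWithinAt
  have hinj : InjOn f (Ioi (0:ℝ)) := by
    intro t1 _ t2 _ h
    simp only [hf] at h
    have : Real.exp (-t1) = Real.exp (-t2) := by
      have h' : b * Real.exp (-t1) = b * Real.exp (-t2) := by linarith
      exact mul_left_cancel₀ hb.ne' h'
    have := Real.exp_injective this
    linarith [neg_injective this]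
  have key : (∫ p in u..1, g p)
      = ∫ t in Ioi (0:ℝ), |b * Real.exp (-t)| • g (f t) := by
    rw [intervalIntegral.integral_of_le hu1.le, MeasureTheory.integral_Ioc_eq_integral_Ioo,
      ← himg]
    exact MeasureTheory.integral_image_eq_integral_abs_deriv_smul
      measurableSet_Ioi hderiv hinj g
  have hpt : ∀ t ∈ Ioi (0:ℝ),
      |b * Real.exp (-t)| • g (f t)
        = (c / r * b ^ (1 / r + 1)) * (t ^ (α + 1 - 1) * Real.exp (-((1 + 1 / r) * t))) := by
    intro t _
    have he : (0:ℝ) < Real.exp (-t) := Real.exp_pos _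
    have h1f : 1 - f t = b * Real.exp (-t) := by simp [hf]
    rw [smul_eq_mul, abs_of_pos (by positivity), hg]
    simp only [h1f]
    rw [Real.log_mul hb.ne' he.ne', Real.log_exp,
      Real.mul_rpow hb.le he.le, Real.rpow_def_of_pos he, Real.log_exp]
    have hbpow : b * (b * b ^ (1 / r - 1)) = b ^ (1 / r + 1) := by
      rw [show (1 / r + 1 : ℝ) = 1 + (1 + (1 / r - 1)) by ring, Real.rpow_add hb,
        Real.rpow_add hb, Real.rpow_one]
    have hlog : Real.log b - (Real.log b + -t) = t := by ring
    rw [hlog]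
    have hexp : Real.exp (-t) * Real.exp (-t) * Real.exp (-t * (1 / r - 1))
        = Real.exp (-((1 + 1 / r) * t)) := by
      rw [← Real.exp_add, ← Real.exp_add]; congr 1; ring
    have hαs : α + 1 - 1 = α := by ring
    rw [hαs]
    calc b * Real.exp (-t) *
          (b * Real.exp (-t) * t ^ α * (c / r * (b ^ (1 / r - 1) * Real.exp (-t * (1 / r - 1)))))
        = (c / r) * (b * (b * b ^ (1 / r - 1))) * t ^ α *
            (Real.exp (-t) * Real.exp (-t) * Real.exp (-t * (1 / r - 1))) := by ring
      _ = c / r * b ^ (1 / r + 1) * (t ^ α * Real.exp (-((1 + 1 / r) * t))) := by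
          rw [hbpow, hexp]; ring
  have hint : (∫ t in Ioi (0:ℝ), |b * Real.exp (-t)| • g (f t))
      = (c / r * b ^ (1 / r + 1)) * ((1 / (1 + 1 / r)) ^ (α + 1) * Real.Gamma (α + 1)) := by
    rw [MeasureTheory.setIntegral_congr_fun measurableSet_Ioi hpt,
      MeasureTheory.integral_const_mul,
      Real.integral_rpow_mul_exp_neg_mul_Ioi (by linarith) (by positivity)]
  rw [key, hint]
  -- final algebra
  have hr1 : (0:ℝ) < r + 1 := by linarith
  have h1 : (1 : ℝ) / (1 + 1 / r) = r / (r + 1) := by field_simp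
  have h2 : (r / (r + 1)) ^ (α + 1) = r ^ (α + 1) / (r + 1) ^ (α + 1) :=
    Real.div_rpow hr.le (by linarith : (0:ℝ) ≤ r + 1) (α + 1)
  have h3 : r ^ (α + 1) = r ^ α * r := by
    rw [Real.rpow_add hr, Real.rpow_one]
  have h4 : b ^ (1 / r + 1) = b ^ (1 / r) * b := by
    rw [Real.rpow_add hb, Real.rpow_one]
  rw [h1, h2, h3, h4]
  have hrp1 : (0:ℝ) < (r + 1) ^ (α + 1) := Real.rpow_pos_of_pos hr1 _
  field_simp
end

section
/- For the proportional hazards model Y of X defined by Q_Y(u) = Q_X(1-(1-u)^{1/θ}) with θ > 0, where X has quantile density q_X(u) = (1-u)^{-A}(-log(1-u))^{-B} with A > 0, B < 1, and θ > A - 1, the Q-FCRE of Y equals θ^α Γ(α - B + 1)/(θ - A + 1)^{α-B+1}. -/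
open Real Set MeasureTheory

theorem qfcre_phm (θ A B α : ℝ) (hθ : 0 < θ) (hA : 0 < A) (hB : B < 1)
    (hθA : A - 1 < θ) (hα0 : 0 ≤ α) (hα1 : α ≤ 1) :
    ∫ p in (0:ℝ)..1,
        (1 - p) * (-Real.log (1 - p)) ^ α *
          (θ ^ (B - 1) * (1 - p) ^ ((1 - A) / θ - 1) * (-Real.log (1 - p)) ^ (-B))
      = θ ^ α * Real.Gamma (α - B + 1) / (θ - A + 1) ^ (α - B + 1) := by
  have hc : 0 < θ - A + 1 := by linarith
  set c : ℝ := (θ - A + 1) / θ with hcdef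
  have hcpos : 0 < c := div_pos hc hθ
  set F : ℝ → ℝ := fun p => (1 - p) * (-Real.log (1 - p)) ^ α *
      (θ ^ (B - 1) * (1 - p) ^ ((1 - A) / θ - 1) * (-Real.log (1 - p)) ^ (-B)) with hF
  set f : ℝ → ℝ := fun t => 1 - Real.exp (-t) with hf
  have himg : f '' Ioi (0:ℝ) = Ioo (0:ℝ) 1 := by
    ext x
    constructor
    · rintro ⟨t, ht, rfl⟩
      have ht' : (0:ℝ) < t := ht
      constructor
      · simp only [hf, sub_pos]
        exact exp_lt_one_iff.mpr (by linarith)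
      · simp only [hf]
        have := Real.exp_pos (-t)
        linarith
    · rintro ⟨hx0, hx1⟩
      refine ⟨-Real.log (1 - x), ?_, ?_⟩
      · have : Real.log (1 - x) < 0 := Real.log_neg (by linarith) (by linarith)
        simpa using this
      · simp only [hf, neg_neg, Real.exp_log (by linarith : (0:ℝ) < 1 - x)]
        ring
  have hinj : InjOn f (Ioi (0:ℝ)) := by
    intro a _ b _ hab
    simp only [hf, sub_right_inj, Real.exp_eq_exp, neg_inj] at hab
    exact hab
  have hderiv : ∀ t ∈ Ioi (0:ℝ), HasDerivWithinAt f (Real.exp (-t)) (Ioi (0:ℝ)) t := by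
    intro t _
    have : HasDerivAt f (Real.exp (-t)) t := by
      have h1 : HasDerivAt (fun t : ℝ => Real.exp (-t)) (Real.exp (-t) * (-1)) t :=
        (Real.hasDerivAt_exp (-t)).comp t (hasDerivAt_neg t)
      have h2 : HasDerivAt f (0 - Real.exp (-t) * (-1)) t :=
        (hasDerivAt_const t (1:ℝ)).sub h1
      simpa using h2
    exact this.hasDerivWithinAt
  have key : (∫ p in Ioo (0:ℝ) 1, F p) = ∫ t in Ioi (0:ℝ), |Real.exp (-t)| • F (f t) := by
    rw [← himg]
    exact integral_image_eq_integral_abs_deriv_smul measurableSet_Ioi hderiv hinj F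
  have hsimp : ∀ t ∈ Ioi (0:ℝ), |Real.exp (-t)| • F (f t)
      = θ ^ (B - 1) * (t ^ (α - B) * Real.exp (-c * t)) := by
    intro t ht
    have ht' : (0:ℝ) < t := ht
    have h1f : 1 - f t = Real.exp (-t) := by simp [hf]
    have hlog : -Real.log (1 - f t) = t := by rw [h1f, Real.log_exp]; ring
    have hrpow : (Real.exp (-t)) ^ ((1 - A) / θ - 1) = Real.exp (-t * ((1 - A) / θ - 1)) := by
      rw [← Real.exp_mul]
    simp only [smul_eq_mul, abs_of_pos (Real.exp_pos (-t)), hF, h1f, hrpow, Real.log_exp, neg_neg]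
    have hts : t ^ (α - B) = t ^ α * t ^ (-B) := by
      rw [← Real.rpow_add ht']; ring_nf
    have hexp : Real.exp (-t) * Real.exp (-t) * Real.exp (-t * ((1 - A) / θ - 1))
        = Real.exp (-c * t) := by
      rw [← Real.exp_add, ← Real.exp_add]
      congr 1
      rw [hcdef]
      field_simp
      ring
    rw [hts, ← hexp]
    ring
  have hgamma : (∫ t in Ioi (0:ℝ), t ^ (α - B) * Real.exp (-c * t))
      = c ^ (-(α - B + 1)) * Real.Gamma (α - B + 1) := by
    have h := integral_rpow_mul_exp_neg_mul_rpow (p := 1) (q := α - B) (b := c)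
      one_pos (by linarith) hcpos
    simp only [Real.rpow_one, div_one, one_div, inv_one, one_mul] at h
    rw [h]
    congr 1
    · congr 1; ring
  calc
    (∫ p in (0:ℝ)..1, F p) = ∫ p in Ioo (0:ℝ) 1, F p := by
      rw [intervalIntegral.integral_of_le (by norm_num : (0:ℝ) ≤ 1),
        MeasureTheory.integral_Ioc_eq_integral_Ioo]
    _ = ∫ t in Ioi (0:ℝ), |Real.exp (-t)| • F (f t) := key
    _ = ∫ t in Ioi (0:ℝ), θ ^ (B - 1) * (t ^ (α - B) * Real.exp (-c * t)) :=
      setIntegral_congr_fun measurableSet_Ioi hsimp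
    _ = θ ^ (B - 1) * ∫ t in Ioi (0:ℝ), t ^ (α - B) * Real.exp (-c * t) := by
      rw [MeasureTheory.integral_const_mul]
    _ = θ ^ (B - 1) * (c ^ (-(α - B + 1)) * Real.Gamma (α - B + 1)) := by rw [hgamma]
    _ = θ ^ α * Real.Gamma (α - B + 1) / (θ - A + 1) ^ (α - B + 1) := by
      have hcpow : c ^ (-(α - B + 1)) = θ ^ (α - B + 1) / (θ - A + 1) ^ (α - B + 1) := by
        rw [Real.rpow_neg hcpos.le, hcdef, Real.div_rpow hc.le hθ.le, inv_div]
      have hθpow : θ ^ (B - 1) * θ ^ (α - B + 1) = θ ^ α := by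
        rw [← Real.rpow_add hθ]; ring_nf
      rw [hcpow]
      calc θ ^ (B - 1) * (θ ^ (α - B + 1) / (θ - A + 1) ^ (α - B + 1) * Real.Gamma (α - B + 1))
          = (θ ^ (B - 1) * θ ^ (α - B + 1)) * Real.Gamma (α - B + 1) /
              (θ - A + 1) ^ (α - B + 1) := by ring
        _ = θ ^ α * Real.Gamma (α - B + 1) / (θ - A + 1) ^ (α - B + 1) := by rw [hθpow]
end

section
/- If X has quantile function Q_X(u) = u^β (power distribution on [0,1], 0 < β < 1), then Y = 1/X has quantile function Q_Y(u) = (1-u)^{-β} (Pareto I), and the Q-FCRE of Y equals β·Γ(α+1)/(1-β)^{α+1}. -/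
open MeasureTheory Set Real

theorem qfcre_reciprocal_power (β α : ℝ) (hβ0 : 0 < β) (hβ1 : β < 1)
    (hα0 : 0 ≤ α) (hα1 : α ≤ 1) :
    (∀ u ∈ Set.Ioo (0:ℝ) 1, 1 / ((1 - u) ^ β) = (1 - u) ^ (-β)) ∧
    ∫ p in (0:ℝ)..1,
        (1 - p) * (-Real.log (1 - p)) ^ α * (β * (1 - p) ^ (-β - 1))
      = β * Real.Gamma (α + 1) / (1 - β) ^ (α + 1) := by
  constructor
  · intro u hu
    rw [Real.rpow_neg (by linarith [hu.2] : (0:ℝ) ≤ 1 - u), one_div]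
  · have h1β : 0 < 1 - β := by linarith
    -- substitution f p = -log(1-p) maps Ioo 0 1 to Ioi 0
    have himg : (fun p : ℝ => -Real.log (1 - p)) '' Ioo 0 1 = Ioi 0 := by
      ext t
      constructor
      · rintro ⟨p, ⟨hp0, hp1⟩, rfl⟩
        have h1p : 0 < 1 - p := by linarith
        have : Real.log (1 - p) < 0 := Real.log_neg h1p (by linarith)
        simpa using this
      · intro ht
        refine ⟨1 - Real.exp (-t), ⟨?_, ?_⟩, ?_⟩
        · have : Real.exp (-t) < 1 := Real.exp_lt_one_iff.mpr (by linarith [mem_Ioi.mp ht])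
          linarith
        · have : 0 < Real.exp (-t) := Real.exp_pos _
          linarith
        · simp [Real.log_exp]
    have hderiv : ∀ p ∈ Ioo (0:ℝ) 1,
        HasDerivWithinAt (fun p : ℝ => -Real.log (1 - p)) (1 / (1 - p)) (Ioo 0 1) p := by
      intro p hp
      have h1p : (1:ℝ) - p ≠ 0 := by have := hp.2; intro h; linarith [hp.2]
      have : HasDerivAt (fun p : ℝ => -Real.log (1 - p)) (1 / (1 - p)) p := by
        have h1 : HasDerivAt (fun p : ℝ => 1 - p) (-1) p := by
          simpa using (hasDerivAt_id p).const_sub 1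
        have h2 := (Real.hasDerivAt_log h1p).comp p h1
        have h3 := h2.neg
        convert h3 using 1
        rfl
        · rfl
        · rfl
        · ring
      exact this.hasDerivWithinAt
    have hinj : InjOn (fun p : ℝ => -Real.log (1 - p)) (Ioo 0 1) := by
      intro a ha b hb hab
      have ha1 : 0 < 1 - a := by linarith [ha.2]
      have hb1 : 0 < 1 - b := by linarith [hb.2]
      have : Real.log (1 - a) = Real.log (1 - b) := by
        simpa using hab
      have := Real.log_injOn_pos (by simpa using ha1) (by simpa using hb1) this
      linarith
    have key := MeasureTheory.integral_image_eq_integral_abs_deriv_smul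
      (measurableSet_Ioo) hderiv hinj
      (fun t => β * (t ^ α * Real.exp (-((1 - β) * t))))
    rw [himg] at key
    have hGamma : ∫ t : ℝ in Ioi 0, t ^ ((α + 1) - 1) * Real.exp (-((1 - β) * t))
        = (1 / (1 - β)) ^ (α + 1) * Real.Gamma (α + 1) :=
      Real.integral_rpow_mul_exp_neg_mul_Ioi (by linarith) h1β
    have hLHS : (∫ p in (0:ℝ)..1,
        (1 - p) * (-Real.log (1 - p)) ^ α * (β * (1 - p) ^ (-β - 1)))
        = ∫ p in Ioo (0:ℝ) 1,
          |1 / (1 - p)| • (β * ((-Real.log (1 - p)) ^ α *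
            Real.exp (-((1 - β) * (-Real.log (1 - p)))))) := by
      rw [intervalIntegral.integral_of_le (by norm_num : (0:ℝ) ≤ 1),
        MeasureTheory.integral_Ioc_eq_integral_Ioo]
      refine setIntegral_congr_fun measurableSet_Ioo (fun p hp => ?_)
      have h1p : 0 < 1 - p := by linarith [hp.2]
      have habs : |1 / (1 - p)| = 1 / (1 - p) := abs_of_pos (by positivity)
      rw [habs, smul_eq_mul]
      have hexp : Real.exp (-((1 - β) * (-Real.log (1 - p)))) = (1 - p) ^ (1 - β) := by
        rw [Real.rpow_def_of_pos h1p]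
        ring_nf
      rw [hexp]
      have hpow : (1 - p) ^ (-β - 1) = (1 - p) ^ (1 - β) / ((1 - p) * (1 - p)) := by
        rw [eq_div_iff (by positivity)]
        have h2 : (1-p)*(1-p) = (1-p)^(2:ℝ) := by
          rw [show (2:ℝ) = ((2:ℕ):ℝ) by norm_num, Real.rpow_natCast]; ring
        rw [h2, ← Real.rpow_add h1p]
        norm_num
        ring_nf
      rw [hpow]
      field_simp
    rw [hLHS, ← key, MeasureTheory.integral_const_mul]
    have : (∫ t : ℝ in Ioi 0, t ^ α * Real.exp (-((1 - β) * t)))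
        = (1 / (1 - β)) ^ (α + 1) * Real.Gamma (α + 1) := by
      rw [← hGamma]; norm_num
    rw [this, Real.div_rpow (by positivity) (le_of_lt h1β), Real.one_rpow]
    field_simp
end

section
/- Hazard quantile ordering does not imply Q-DFCRE ordering in either direction: for X uniform on (0,2) and Y exponential with rate 1, E_α^Q(X,u) = (1-u)Γ(α+1)/2^α ≤ Γ(α+1) = E_α^Q(Y,u) for all u ∈ [0,1) and α ∈ (0,1], yet H_X(u) = 1/(2(1-u)) ≥ H_Y(u) = 1 exactly when u > 1/2 and H_X(u) ≤ H_Y(u) when u < 1/2. -/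
open MeasureTheory Set

private lemma exp_subst (u : ℝ) (hu : u < 1) (g : ℝ → ℝ) :
    ∫ p in Set.Ioo u 1, g p
      = ∫ t in Set.Ioi (0:ℝ), ((1-u) * Real.exp (-t)) * g (1 - (1-u) * Real.exp (-t)) := by
  have h1u : 0 < 1 - u := by linarith
  have himg : (fun t => 1 - (1-u) * Real.exp (-t)) '' Set.Ioi 0 = Set.Ioo u 1 := by
    ext p
    constructor
    · rintro ⟨t, ht, rfl⟩
      have ht' : (0:ℝ) < t := ht
      have h1 : Real.exp (-t) < 1 := Real.exp_lt_one_iff.mpr (by linarith)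
      have h2 : 0 < Real.exp (-t) := Real.exp_pos _
      refine Set.mem_Ioo.mpr ⟨?_, ?_⟩ <;>
        simp only <;> nlinarith
    · rintro ⟨hp1, hp2⟩
      have h1p : 0 < 1 - p := by linarith
      refine ⟨Real.log ((1-u)/(1-p)), ?_, ?_⟩
      · exact Real.log_pos (by rw [lt_div_iff₀ h1p]; linarith)
      · show 1 - (1-u) * Real.exp (-(Real.log ((1-u)/(1-p)))) = p
        rw [Real.exp_neg, Real.exp_log (by positivity)]
        field_simp
        ring
  rw [← himg,
    integral_image_eq_integral_abs_deriv_smul measurableSet_Ioi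
      (f' := fun t => (1-u) * Real.exp (-t)) ?_ ?_ g]
  · refine setIntegral_congr_fun measurableSet_Ioi (fun t _ => ?_)
    rw [abs_of_pos (by positivity), smul_eq_mul]
  · intro t _
    have h1 : HasDerivAt (fun t:ℝ => -t) (-1) t := (hasDerivAt_id t).neg
    have h2 := (Real.hasDerivAt_exp (-t)).comp t h1
    have h3 := (h2.const_mul (1-u)).const_sub 1
    have h4 : HasDerivAt (fun t:ℝ => 1 - (1-u)*Real.exp (-t)) ((1-u)*Real.exp (-t)) t := by
      exact h3.congr_deriv (by ring)
    exact h4.hasDerivWithinAt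
  · intro t1 _ t2 _ h
    simp only at h
    have h' : (1-u) * Real.exp (-t1) = (1-u) * Real.exp (-t2) := by linarith
    have := Real.exp_injective (mul_left_cancel₀ (ne_of_gt h1u) h')
    linarith

private lemma gamma_int (α : ℝ) (hα0 : 0 < α) (r : ℝ) (hr : 0 < r) :
    ∫ t in Set.Ioi (0:ℝ), t ^ α * Real.exp (-(r*t)) = (1/r) ^ (α+1) * Real.Gamma (α+1) := by
  have := Real.integral_rpow_mul_exp_neg_mul_Ioi (a := α + 1) (r := r) (by linarith) hr
  simpa using this

theorem hazard_order_does_not_imply_qdfcre_order (α : ℝ) (hα0 : 0 < α) (hα1 : α ≤ 1) :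
    (∀ u ∈ Set.Ico (0:ℝ) 1,
        (1 / (1 - u)) *
            (∫ p in u..1, (1 - p) * (Real.log (1 - u) - Real.log (1 - p)) ^ α * 2)
          = (1 - u) * Real.Gamma (α + 1) / 2 ^ α) ∧
    (∀ u ∈ Set.Ico (0:ℝ) 1,
        (1 / (1 - u)) *
            (∫ p in u..1,
              (1 - p) * (Real.log (1 - u) - Real.log (1 - p)) ^ α * (1 / (1 - p)))
          = Real.Gamma (α + 1)) ∧
    (∀ u ∈ Set.Ico (0:ℝ) 1,
        (1 - u) * Real.Gamma (α + 1) / 2 ^ α ≤ Real.Gamma (α + 1)) ∧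
    (∀ u ∈ Set.Ioo ((1:ℝ)/2) 1, (1:ℝ) ≤ 1 / (2 * (1 - u))) ∧
    (∀ u ∈ Set.Ioo (0:ℝ) (1/2), 1 / (2 * (1 - u)) ≤ 1) := by
  have hΓ : 0 < Real.Gamma (α + 1) := Real.Gamma_pos_of_pos (by linarith)
  have h2α : (0:ℝ) < 2 ^ α := by positivity
  refine ⟨?_, ?_, ?_, ?_, ?_⟩
  · intro u ⟨hu0, hu1⟩
    have h1u : 0 < 1 - u := by linarith
    rw [intervalIntegral.integral_of_le hu1.le, integral_Ioc_eq_integral_Ioo,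
      exp_subst u hu1]
    have hcong : ∀ t ∈ Set.Ioi (0:ℝ),
        ((1-u) * Real.exp (-t)) *
          ((1 - (1 - (1-u) * Real.exp (-t)))
            * (Real.log (1 - u) - Real.log (1 - (1 - (1-u) * Real.exp (-t)))) ^ α * 2)
        = (2*(1-u)^2) * (t ^ α * Real.exp (-(2*t))) := by
      intro t _
      have h1 : 1 - (1 - (1-u) * Real.exp (-t)) = (1-u) * Real.exp (-t) := by ring
      rw [h1, Real.log_mul (ne_of_gt h1u) (Real.exp_ne_zero _), Real.log_exp]
      rw [show Real.log (1-u) - (Real.log (1-u) + -t) = t by ring]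
      rw [show -(2*t) = -t + -t by ring, Real.exp_add]
      ring
    rw [setIntegral_congr_fun measurableSet_Ioi hcong, MeasureTheory.integral_const_mul,
      gamma_int α hα0 2 two_pos]
    have h12 : ((1:ℝ)/2) ^ (α+1) = 1 / (2^α * 2) := by
      rw [Real.div_rpow zero_le_one (by norm_num), Real.one_rpow,
        Real.rpow_add two_pos, Real.rpow_one]
    rw [h12]
    field_simp
  · intro u ⟨hu0, hu1⟩
    have h1u : 0 < 1 - u := by linarith
    rw [intervalIntegral.integral_of_le hu1.le, integral_Ioc_eq_integral_Ioo,
      exp_subst u hu1]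
    have hcong : ∀ t ∈ Set.Ioi (0:ℝ),
        ((1-u) * Real.exp (-t)) *
          ((1 - (1 - (1-u) * Real.exp (-t)))
            * (Real.log (1 - u) - Real.log (1 - (1 - (1-u) * Real.exp (-t)))) ^ α
            * (1 / (1 - (1 - (1-u) * Real.exp (-t)))))
        = (1-u) * (t ^ α * Real.exp (-(1*t))) := by
      intro t _
      have hexp : 0 < Real.exp (-t) := Real.exp_pos _
      have h1 : 1 - (1 - (1-u) * Real.exp (-t)) = (1-u) * Real.exp (-t) := by ring
      rw [h1, Real.log_mul (ne_of_gt h1u) (Real.exp_ne_zero _), Real.log_exp]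
      rw [show Real.log (1-u) - (Real.log (1-u) + -t) = t by ring]
      rw [one_mul]
      field_simp
    rw [setIntegral_congr_fun measurableSet_Ioi hcong, MeasureTheory.integral_const_mul,
      gamma_int α hα0 1 one_pos]
    rw [show (1:ℝ)/1 = 1 by norm_num, Real.one_rpow]
    field_simp
  · intro u ⟨hu0, hu1⟩
    rw [div_le_iff₀ h2α]
    have h1 : (1:ℝ) ≤ 2 ^ α := by
      calc (1:ℝ) = 2 ^ (0:ℝ) := by rw [Real.rpow_zero]
      _ ≤ 2 ^ α := Real.rpow_le_rpow_left_iff one_lt_two |>.mpr hα0.le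
    nlinarith
  · intro u ⟨hu0, hu1⟩
    rw [le_div_iff₀ (by linarith)]
    linarith
  · intro u ⟨hu0, hu1⟩
    rw [div_le_one (by linarith)]
    linarith
end
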